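/- Let q₀, q₁, q₂, q₃ ∈ ℝ³ be affinely independent, forming the closed quadrilateral P₄ with edges e₁ = [q₀,q₁], e₂ = [q₁,q₂], e₃ = [q₂,q₃], e₄ = [q₃,q₀]. Define the average crossing number ACN(P₄) = (1/(4π)) Σ_{(i,j), i≠j} ∫₀¹∫₀¹ |det(dᵢ, dⱼ, γᵢ(t)−γⱼ(s))| / ‖γᵢ(t)−γⱼ(s)‖³ ds dt, where the sum runs over ordered pairs of distinct edges, γᵢ is the linear parametrization of eᵢ and dᵢ its direction vector. Then ACN(P₄) = 2·|L(q₀,q₁;q₂,q₃)| + 2·|L(q₁,q₂;q₃,q₀)|, i.e., the average crossing number of the quadrilateral equals twice the sum of the absolute Gauss linking integrals of its two pairs of opposite edges. -/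

import Mathlib

open MeasureTheory RealInnerProductSpace

noncomputable section

/-- Euclidean 3-space. -/
abbrev R3 := EuclideanSpace ℝ (Fin 3)

/-- The cross product on Euclidean 3-space. -/
def cross3 (u v : R3) : R3 :=
  (EuclideanSpace.equiv (Fin 3) ℝ).symm
    ![u 1 * v 2 - u 2 * v 1, u 2 * v 0 - u 0 * v 2, u 0 * v 1 - u 1 * v 0]

/-- The scalar triple product `det(u,v,w) = ⟨u × v, w⟩`. -/
def det3 (u v w : R3) : ℝ := ⟪cross3 u v, w⟫

/-- The Gauss linking integral of the segments `[a,b]` and `[c,d]`. -/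
def gaussL (a b c d : R3) : ℝ :=
  (1 / (4 * Real.pi)) * ∫ t in (0:ℝ)..1, ∫ s in (0:ℝ)..1,
    det3 (b - a) (d - c) ((a + t • (b - a)) - (c + s • (d - c))) /
      ‖(a + t • (b - a)) - (c + s • (d - c))‖ ^ 3

/-- The (unnormalized) absolute Gauss integral of the segments `[a,b]` and `[c,d]`. -/
def rawAbsGauss (a b c d : R3) : ℝ :=
  ∫ t in (0:ℝ)..1, ∫ s in (0:ℝ)..1,
    |det3 (b - a) (d - c) ((a + t • (b - a)) - (c + s • (d - c)))| /
      ‖(a + t • (b - a)) - (c + s • (d - c))‖ ^ 3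

lemma det3_apply (u v w : R3) : det3 u v w =
    (u 1 * v 2 - u 2 * v 1) * w 0 + (u 2 * v 0 - u 0 * v 2) * w 1 +
      (u 0 * v 1 - u 1 * v 0) * w 2 := by
  simp [det3, cross3, PiLp.inner_apply, Fin.sum_univ_three]
  ring

lemma det3_reduce (a c u v : R3) (t s : ℝ) :
    det3 u v ((a + t • u) - (c + s • v)) = det3 u v (a - c) := by
  simp only [det3_apply, PiLp.add_apply, PiLp.sub_apply, PiLp.smul_apply, smul_eq_mul]
  ring

/-- `rawAbsGauss` in terms of the absolute value of the Gauss linking integral. -/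
lemma raw_eq_abs (a b c d : R3) :
    rawAbsGauss a b c d = 4 * Real.pi * |gaussL a b c d| := by
  have hπ : (0:ℝ) < 4 * Real.pi := by positivity
  set C := det3 (b - a) (d - c) (a - c) with hCdef
  have hred : ∀ t s : ℝ,
      det3 (b - a) (d - c) ((a + t • (b - a)) - (c + s • (d - c))) = C :=
    fun t s => det3_reduce a c (b - a) (d - c) t s
  have habsI : rawAbsGauss a b c d =
      |∫ t in (0:ℝ)..1, ∫ s in (0:ℝ)..1,
        det3 (b - a) (d - c) ((a + t • (b - a)) - (c + s • (d - c))) /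
          ‖(a + t • (b - a)) - (c + s • (d - c))‖ ^ 3| := by
    unfold rawAbsGauss
    simp only [hred]
    rcases abs_choice C with hC | hC
    · rw [hC, abs_of_nonneg]
      apply intervalIntegral.integral_nonneg zero_le_one
      intro t _
      apply intervalIntegral.integral_nonneg zero_le_one
      intro s _
      exact div_nonneg (abs_eq_self.mp hC) (by positivity)
    · rw [hC, abs_of_nonpos]
      · simp only [neg_div, intervalIntegral.integral_neg]
      · rw [← neg_nonneg]
        simp only [← intervalIntegral.integral_neg, ← neg_div]
        apply intervalIntegral.integral_nonneg zero_le_one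
        intro t _
        apply intervalIntegral.integral_nonneg zero_le_one
        intro s _
        exact div_nonneg (neg_nonneg.mpr (abs_eq_neg_self.mp hC)) (by positivity)
  rw [habsI]
  unfold gaussL
  rw [abs_mul, abs_of_pos (by positivity : (0:ℝ) < 1 / (4 * Real.pi))]
  field_simp

/-- Vanishing when the constant determinant is zero. -/
lemma raw_zero (a b c d : R3) (h : det3 (b - a) (d - c) (a - c) = 0) :
    rawAbsGauss a b c d = 0 := by
  unfold rawAbsGauss
  simp only [det3_reduce, h, abs_zero, zero_div, intervalIntegral.integral_zero]

lemma raw_adj1 (x y z : R3) : rawAbsGauss x y y z = 0 := by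
  apply raw_zero
  simp only [det3_apply, PiLp.sub_apply]; ring

lemma raw_adj2 (x y z : R3) : rawAbsGauss y z x y = 0 := by
  apply raw_zero
  simp only [det3_apply, PiLp.sub_apply]; ring

lemma raw_diag' (x y : R3) : rawAbsGauss x y x y = 0 := by
  apply raw_zero
  simp only [det3_apply, PiLp.sub_apply]; ring

/-- Symmetry of `rawAbsGauss` for skew segments. -/
lemma raw_swap (a b c d : R3) (hC : det3 (b - a) (d - c) (a - c) ≠ 0) :
    rawAbsGauss c d a b = rawAbsGauss a b c d := by
  set u := b - a with hu
  set v := d - c with hv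
  set C := det3 u v (a - c) with hCdef
  have hX : ∀ t s : ℝ, (a + t • u) - (c + s • v) ≠ 0 := by
    intro t s h0
    apply hC
    rw [hCdef, ← det3_reduce a c u v t s, h0]
    simp [det3_apply]
  set g : ℝ → ℝ → ℝ := fun t s => |C| / ‖(a + t • u) - (c + s • v)‖ ^ 3 with hg
  have h1 : rawAbsGauss a b c d = ∫ t in (0:ℝ)..1, ∫ s in (0:ℝ)..1, g t s := by
    unfold rawAbsGauss
    simp only [det3_reduce, ← hu, ← hv, ← hCdef, hg]
  have h2 : rawAbsGauss c d a b = ∫ t in (0:ℝ)..1, ∫ s in (0:ℝ)..1, g s t := by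
    unfold rawAbsGauss
    have hnum : ∀ t s : ℝ,
        |det3 (d - c) (b - a) ((c + t • (d - c)) - (a + s • (b - a)))| = |C| := by
      intro t s
      rw [det3_reduce c a (d - c) (b - a) t s]
      have : det3 (d - c) (b - a) (c - a) = C := by
        simp only [hCdef, hu, hv, det3_apply, PiLp.sub_apply]; ring
      rw [this]
    have hden : ∀ t s : ℝ,
        ‖(c + t • (d - c)) - (a + s • (b - a))‖ = ‖(a + s • u) - (c + t • v)‖ := by
      intro t s; rw [← norm_neg]; congr 1; rw [hu, hv]; abel
    simp only [hnum, hden, hg]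
  rw [h1, h2]
  have hcont : Continuous fun p : ℝ × ℝ => g p.1 p.2 := by
    apply Continuous.div continuous_const
    · fun_prop
    · intro p
      exact pow_ne_zero 3 (norm_ne_zero_iff.mpr (hX p.1 p.2))
  have hint : Integrable (Function.uncurry fun t s => g t s)
      ((volume.restrict (Set.Ioc (0:ℝ) 1)).prod (volume.restrict (Set.Ioc (0:ℝ) 1))) := by
    rw [Measure.prod_restrict]
    exact (hcont.continuousOn.integrableOn_compact ((isCompact_Icc (a := (0:ℝ)) (b := 1)).prod isCompact_Icc)).mono_set
      (Set.prod_mono Set.Ioc_subset_Icc_self Set.Ioc_subset_Icc_self)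
  have hint' : Integrable (Function.uncurry fun t s => g s t)
      ((volume.restrict (Set.Ioc (0:ℝ) 1)).prod (volume.restrict (Set.Ioc (0:ℝ) 1))) := by
    have := hint.swap
    exact this
  have hswap := MeasureTheory.integral_integral_swap (f := fun t s => g s t) hint'
  simp only [intervalIntegral.integral_of_le (zero_le_one (α := ℝ))]
  rw [hswap]

lemma hD_of_affineIndependent (q₀ q₁ q₂ q₃ : R3) (h : AffineIndependent ℝ ![q₀, q₁, q₂, q₃]) :
    det3 (q₁ - q₀) (q₂ - q₀) (q₃ - q₀) ≠ 0 := by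
  have hli := (affineIndependent_iff_linearIndependent_vsub ℝ ![q₀, q₁, q₂, q₃] 0).mp h
  have hf : Function.Injective (fun i : Fin 3 => (⟨i.succ, Fin.succ_ne_zero i⟩ : {x : Fin 4 // x ≠ 0})) := by
    intro a b hab
    simpa [Fin.succ_inj] using congrArg Subtype.val hab
  have hli2 := hli.comp _ hf
  set M : Matrix (Fin 3) (Fin 3) ℝ :=
    Matrix.of (fun i j => (![q₁ - q₀, q₂ - q₀, q₃ - q₀] i : R3) j) with hM
  have hrows : LinearIndependent ℝ (fun i => M i) := by
    have : (fun i => M i) = fun i : Fin 3 =>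
        ((EuclideanSpace.equiv (Fin 3) ℝ).toLinearEquiv.toLinearMap)
          ((![q₀, q₁, q₂, q₃] ∘ fun i : Fin 3 => ((⟨i.succ, Fin.succ_ne_zero i⟩ : {x : Fin 4 // x ≠ 0}) : Fin 4)) i -ᵥ ![q₀, q₁, q₂, q₃] 0) := by
      funext i; fin_cases i <;> rfl
    rw [this]
    exact hli2.map' _ (LinearEquiv.ker _)
  have hU : IsUnit M := Matrix.linearIndependent_rows_iff_isUnit.mp hrows
  have hdet : M.det ≠ 0 := by
    intro h0
    exact (by simpa [h0] using (Matrix.isUnit_iff_isUnit_det M).mp hU : IsUnit (0:ℝ)).ne_zero rfl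
  intro h0
  apply hdet
  rw [Matrix.det_fin_three]
  rw [det3_apply] at h0
  simp only [hM, Matrix.of_apply, Matrix.cons_val', Matrix.cons_val_zero, Matrix.cons_val_one,
    Matrix.head_cons, Matrix.cons_val_two, Matrix.tail_cons, Matrix.empty_val',
    Matrix.cons_val_fin_one, PiLp.sub_apply] at *
  linarith [h0]

/-- The average crossing number of the closed quadrilateral with vertices `q₀ q₁ q₂ q₃`
equals twice the sum of the absolute Gauss linking integrals of its two pairs of opposite
edges. -/
theorem acn_quadrilateral (q₀ q₁ q₂ q₃ : R3)
    (h : AffineIndependent ℝ ![q₀, q₁, q₂, q₃]) :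
    ((1 / (4 * Real.pi)) *
        ∑ i : Fin 4, ∑ j ∈ Finset.univ.erase i,
          rawAbsGauss (![q₀, q₁, q₂, q₃] i) (![q₁, q₂, q₃, q₀] i)
            (![q₀, q₁, q₂, q₃] j) (![q₁, q₂, q₃, q₀] j)) =
      2 * |gaussL q₀ q₁ q₂ q₃| + 2 * |gaussL q₁ q₂ q₃ q₀| := by
  have hD := hD_of_affineIndependent q₀ q₁ q₂ q₃ h
  have hC1 : det3 (q₁ - q₀) (q₃ - q₂) (q₀ - q₂) ≠ 0 := by
    intro h0; apply hD
    have : det3 (q₁ - q₀) (q₂ - q₀) (q₃ - q₀) = det3 (q₁ - q₀) (q₃ - q₂) (q₀ - q₂) := by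
      simp only [det3_apply, PiLp.sub_apply]; ring
    rw [this, h0]
  have hC2 : det3 (q₂ - q₁) (q₀ - q₃) (q₁ - q₃) ≠ 0 := by
    intro h0; apply hD
    have : det3 (q₁ - q₀) (q₂ - q₀) (q₃ - q₀) = -det3 (q₂ - q₁) (q₀ - q₃) (q₁ - q₃) := by
      simp only [det3_apply, PiLp.sub_apply]; ring
    rw [this, h0, neg_zero]
  simp only [Fin.sum_univ_four]
  rw [Finset.sum_erase_eq_sub (Finset.mem_univ (0 : Fin 4)),
    Finset.sum_erase_eq_sub (Finset.mem_univ (1 : Fin 4)),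
    Finset.sum_erase_eq_sub (Finset.mem_univ (2 : Fin 4)),
    Finset.sum_erase_eq_sub (Finset.mem_univ (3 : Fin 4))]
  simp only [Fin.sum_univ_four, Matrix.cons_val_zero, Matrix.cons_val_one, Matrix.head_cons,
    Matrix.cons_val_two, Matrix.tail_cons, Matrix.cons_val_three, Matrix.head_fin_const]
  rw [raw_swap q₀ q₁ q₂ q₃ hC1, raw_swap q₁ q₂ q₃ q₀ hC2,
    raw_eq_abs q₀ q₁ q₂ q₃, raw_eq_abs q₁ q₂ q₃ q₀]
  simp only [raw_adj1, raw_adj2, raw_diag']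
  have hπ : Real.pi ≠ 0 := Real.pi_ne_zero
  field_simp
  ring
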